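/- Quantitative subject expansion: if M → N and π = Δ ⊢ N : α is derivable, then there is a derivation π′ = Δ ⊢ M : α with |π′| = |π| + 1. -/

import Mathlib

-- Computational and parallel types
mutual
  inductive CTy : Type
    | one : CTy
    | tens : CTy → CTy → CTy
    | arr : CTy → PTy → CTy
  inductive PTy : Type
    | ofC : CTy → PTy
    | par : PTy → PTy → PTy
end

-- Type equivalence: AC of ⊗ and ⅋, 1 neutral for ⊗
mutual
  inductive CEq : CTy → CTy → Prop
    | refl (τ) : CEq τ τ
    | symm : CEq τ ρ → CEq ρ τ
    | trans : CEq τ ρ → CEq ρ σ → CEq τ σ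
    | comm (τ ρ) : CEq (.tens τ ρ) (.tens ρ τ)
    | assoc (τ ρ σ) : CEq (.tens (.tens τ ρ) σ) (.tens τ (.tens ρ σ))
    | unit (τ) : CEq (.tens τ .one) τ
    | tensCongr : CEq τ τ' → CEq ρ ρ' → CEq (.tens τ ρ) (.tens τ' ρ')
    | arrCongr : CEq τ τ' → PEq α α' → CEq (.arr τ α) (.arr τ' α')
  inductive PEq : PTy → PTy → Prop
    | refl (α) : PEq α α
    | symm : PEq α β → PEq β α
    | trans : PEq α β → PEq β γ → PEq α γ
    | comm (α β) : PEq (.par α β) (.par β α)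
    | assoc (α β γ) : PEq (.par (.par α β) γ) (.par α (.par β γ))
    | parCongr : PEq α α' → PEq β β' → PEq (.par α β) (.par α' β')
    | ofC : CEq τ τ' → PEq (.ofC τ) (.ofC τ')
end

def Ctx : Type := ℕ → CTy
def Ctx.empty : Ctx := fun _ => CTy.one
def Ctx.tens (Γ Δ : Ctx) : Ctx := fun n => CTy.tens (Γ n) (Δ n)
def Ctx.single (x : ℕ) (τ : CTy) : Ctx := fun n => if n = x then τ else CTy.one
def Ctx.cons (τ : CTy) (Γ : Ctx) : Ctx := fun n =>
  match n with
  | 0 => τ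
  | n+1 => Γ n
def CtxEq (Γ Δ : Ctx) : Prop := ∀ n, CEq (Γ n) (Δ n)

def tensList (l : List CTy) : CTy := l.foldr CTy.tens CTy.one
def tensFin (n : ℕ) (f : Fin n → CTy) : CTy := tensList (List.ofFn f)
def tensCtxFin (n : ℕ) (Δ : Fin n → Ctx) : Ctx := fun x => tensFin n (fun i => Δ i x)

def parList : List PTy → PTy
  | [] => PTy.ofC CTy.one
  | [α] => α
  | α :: β :: rest => PTy.par α (parList (β :: rest))

def parFin (n : ℕ) (f : Fin n → PTy) : PTy := parList (List.ofFn f)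

/-- ⅋ᵏ1 : the par of k copies of 1 (left associated); junk value at 0. -/
def parOnes : ℕ → PTy
  | 0 => PTy.ofC CTy.one
  | 1 => PTy.ofC CTy.one
  | n+2 => PTy.par (parOnes (n+1)) (PTy.ofC CTy.one)

/-- Terms of Λ₊∥ in de Bruijn notation. -/
inductive Tm : Type
  | var : ℕ → Tm
  | lam : Tm → Tm
  | app : Tm → Tm → Tm
  | plus : Tm → Tm → Tm
  | par : Tm → Tm → Tm

def IsValue : Tm → Prop
  | .var _ => True
  | .lam _ => True
  | _ => False

def IsPar : Tm → Prop
  | .par _ _ => True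
  | _ => False

def shiftTm (c : ℕ) : Tm → Tm
  | .var n => if n < c then .var n else .var (n+1)
  | .lam M => .lam (shiftTm (c+1) M)
  | .app M N => .app (shiftTm c M) (shiftTm c N)
  | .plus M N => .plus (shiftTm c M) (shiftTm c N)
  | .par M N => .par (shiftTm c M) (shiftTm c N)

/-- Capture-avoiding substitution `M[V/k]` (de Bruijn). -/
def substTm : Tm → ℕ → Tm → Tm
  | .var n, k, V => if n = k then V else if k < n then .var (n-1) else .var n
  | .lam M, k, V => .lam (substTm M (k+1) (shiftTm 0 V))
  | .app M N, k, V => .app (substTm M k V) (substTm N k V)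
  | .plus M N, k, V => .plus (substTm M k V) (substTm N k V)
  | .par M N, k, V => .par (substTm M k V) (substTm N k V)

def closedUnder : ℕ → Tm → Prop
  | d, .var n => n < d
  | d, .lam M => closedUnder (d+1) M
  | d, .app M N => closedUnder d M ∧ closedUnder d N
  | d, .plus M N => closedUnder d M ∧ closedUnder d N
  | d, .par M N => closedUnder d M ∧ closedUnder d N

def Closed (M : Tm) : Prop := closedUnder 0 M

/-- One-step reduction; the boolean flag records whether a +-reduction is used. -/
inductive Step : Bool → Tm → Tm → Prop
  | beta {M V} : IsValue V → Step false (.app (.lam M) V) (substTm M 0 V)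
  | plusL (M N) : Step true (.plus M N) M
  | plusR (M N) : Step true (.plus M N) N
  | parAppL (M N P) : Step false (.app (.par M N) P) (.par (.app M P) (.app N P))
  | parAppR {V} (M N) : IsValue V → Step false (.app V (.par M N)) (.par (.app V M) (.app V N))
  | parL {b M M'} (N) : Step b M M' → Step b (.par M N) (.par M' N)
  | parR {b N N'} (M) : Step b N N' → Step b (.par M N) (.par M N')
  | appL {b M M'} (N) : Step b M M' → ¬ IsPar M → Step b (.app M N) (.app M' N)
  | appR {b M M' V} : IsValue V → Step b M M' → ¬ IsPar M → Step b (.app V M) (.app V M')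

/-- The two contracta of a single +-redex, reduced in context. -/
inductive PlusPair : Tm → Tm → Tm → Prop
  | base (M N) : PlusPair (.plus M N) M N
  | parL {M M₁ M₂} (N) : PlusPair M M₁ M₂ → PlusPair (.par M N) (.par M₁ N) (.par M₂ N)
  | parR {N N₁ N₂} (M) : PlusPair N N₁ N₂ → PlusPair (.par M N) (.par M N₁) (.par M N₂)
  | appL {M M₁ M₂} (N) : PlusPair M M₁ M₂ → ¬ IsPar M → PlusPair (.app M N) (.app M₁ N) (.app M₂ N)
  | appR {M M₁ M₂ V} : IsValue V → PlusPair M M₁ M₂ → ¬ IsPar M → PlusPair (.app V M) (.app V M₁) (.app V M₂)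

/-- n-step reduction. -/
inductive Steps : ℕ → Tm → Tm → Prop
  | refl (M) : Steps 0 M M
  | head {b M N P n} : Step b M N → Steps n N P → Steps (n+1) M P

/-- A closed term converges iff it reduces to a parallel composition of values. -/
def Converges (M : Tm) : Prop :=
  ∃ (n : ℕ) (V : Tm) (Vs : List Tm), IsValue V ∧ (∀ W ∈ Vs, IsValue W) ∧
    Steps n M (Vs.foldl Tm.par V)

/-- Typing derivations, indexed by the measure |π|. -/
inductive Deriv : Ctx → Tm → PTy → ℕ → Prop
  | ax (x : ℕ) (τ : CTy) : Deriv (Ctx.single x τ) (.var x) (.ofC τ) 0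
  | lamI (n : ℕ) (Δ : Fin n → Ctx) (τ : Fin n → CTy) (α : Fin n → PTy) (ms : Fin n → ℕ)
      (M : Tm) :
      (∀ i, Deriv (Ctx.cons (τ i) (Δ i)) M (α i) (ms i)) →
      Deriv (tensCtxFin n Δ) (.lam M)
        (.ofC (tensFin n (fun i => .arr (τ i) (α i)))) (∑ i, ms i)
  | appE (k : ℕ) (hk : 0 < k) (nf : Fin k → ℕ) (hn : ∀ i, 0 < nf i)
      (τ : ∀ i : Fin k, Fin (nf i) → CTy) (α : ∀ i : Fin k, Fin (nf i) → PTy)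
      (Δ : Ctx) (Γ : Fin k → Ctx) (m0 : ℕ) (ms : Fin k → ℕ) (M N : Tm) :
      Deriv Δ M (parFin k (fun i => .ofC (tensFin (nf i) (fun j => .arr (τ i j) (α i j))))) m0 →
      (∀ i, Deriv (Γ i) N (parFin (nf i) (fun j => .ofC (τ i j))) (ms i)) →
      Deriv (Ctx.tens Δ (tensCtxFin k Γ)) (.app M N)
        (parFin k (fun i => parFin (nf i) (α i)))
        ((m0 + (∑ i, ms i) + (∑ i, 2 * nf i)) - 1)
  | plusL {Δ M α m} (N) : Deriv Δ M α m → Deriv Δ (.plus M N) α (m+1)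
  | plusR {Δ N α m} (M) : Deriv Δ N α m → Deriv Δ (.plus M N) α (m+1)
  | parI {Δ Γ M N α β m m'} : Deriv Δ M α m → Deriv Γ N β m' →
      Deriv (Ctx.tens Δ Γ) (.par M N) (.par α β) (m + m')
  | eqv {Γ Γ' M α α' m} : Deriv Γ M α m → CtxEq Γ Γ' → PEq α α' → Deriv Γ' M α' m

def deltaTm : Tm := .lam (.app (.var 0) (.var 0))
def OmegaTm : Tm := .app deltaTm deltaTm
def Idt : Tm := .lam (.var 0)
def dstarTm : Tm := .lam (.lam (.app (.var 1) (.var 1)))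
def YstarTm : Tm := .app dstarTm dstarTm


/-! ### Auxiliary infrastructure -/

section Infra

-- basic CEq lemmas
theorem ceq_one_tens (τ : CTy) : CEq (.tens .one τ) τ :=
  (CEq.comm _ _).trans (CEq.unit τ)

theorem ceq_tens_one (τ : CTy) : CEq (.tens τ .one) τ := CEq.unit τ

theorem tens_tens_comm (a b c d : CTy) :
    CEq (.tens (.tens a b) (.tens c d)) (.tens (.tens a c) (.tens b d)) := by
  refine ((CEq.assoc _ _ _).symm.trans ?_).trans (CEq.assoc _ _ _)
  refine CEq.tensCongr ?_ (CEq.refl d)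
  refine (CEq.assoc _ _ _).trans (CEq.trans ?_ (CEq.assoc _ _ _).symm)
  exact CEq.tensCongr (CEq.refl a) (CEq.comm _ _)

-- tensList / tensFin
theorem tensList_nil : tensList [] = CTy.one := rfl
theorem tensList_cons (a : CTy) (l : List CTy) :
    tensList (a :: l) = CTy.tens a (tensList l) := rfl

theorem tensList_append (l₁ l₂ : List CTy) :
    CEq (tensList (l₁ ++ l₂)) (.tens (tensList l₁) (tensList l₂)) := by
  induction l₁ with
  | nil => exact (ceq_one_tens _).symm
  | cons a t ih =>
      simpa [tensList_cons] using
        ((CEq.tensCongr (CEq.refl a) ih).trans (CEq.assoc a (tensList t) (tensList l₂)).symm)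

theorem tensFin_zero (f : Fin 0 → CTy) : tensFin 0 f = CTy.one := rfl

theorem tensFin_succ (n : ℕ) (f : Fin (n+1) → CTy) :
    tensFin (n+1) f = CTy.tens (f 0) (tensFin n (fun i => f i.succ)) := by
  simp [tensFin, List.ofFn_succ, tensList_cons]

theorem ceq_tensFin_congr {n : ℕ} {f g : Fin n → CTy} (h : ∀ i, CEq (f i) (g i)) :
    CEq (tensFin n f) (tensFin n g) := by
  induction n with
  | zero => exact CEq.refl _
  | succ n ih =>
      rw [tensFin_succ, tensFin_succ]
      exact CEq.tensCongr (h 0) (ih fun i => h i.succ)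

theorem tensFin_ones {n : ℕ} {f : Fin n → CTy} (h : ∀ i, CEq (f i) .one) :
    CEq (tensFin n f) .one := by
  induction n with
  | zero => exact CEq.refl _
  | succ n ih =>
      rw [tensFin_succ]
      exact (CEq.tensCongr (h 0) (ih fun i => h i.succ)).trans (CEq.unit _)

theorem tensFin_tens (n : ℕ) (f g : Fin n → CTy) :
    CEq (tensFin n (fun i => .tens (f i) (g i))) (.tens (tensFin n f) (tensFin n g)) := by
  induction n with
  | zero => exact (ceq_tens_one _).symm
  | succ n ih =>
      rw [tensFin_succ, tensFin_succ, tensFin_succ]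
      exact (CEq.tensCongr (CEq.refl _) (ih (fun i => f i.succ) (fun i => g i.succ))).trans
        (tens_tens_comm _ _ _ _)

-- parList / parFin
theorem parList_cons (a : PTy) {l : List PTy} (h : l ≠ []) :
    parList (a :: l) = PTy.par a (parList l) := by
  cases l with
  | nil => exact absurd rfl h
  | cons b t => rfl

theorem parList_append {l₁ l₂ : List PTy} (h₁ : l₁ ≠ []) (h₂ : l₂ ≠ []) :
    PEq (parList (l₁ ++ l₂)) (.par (parList l₁) (parList l₂)) := by
  induction l₁ with
  | nil => exact absurd rfl h₁
  | cons a t ih =>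
      cases t with
      | nil =>
          rw [List.singleton_append, parList_cons a h₂]
          exact PEq.refl _
      | cons b t' =>
          rw [List.cons_append, parList_cons a (by simp), parList_cons a (by simp)]
          exact (PEq.parCongr (PEq.refl a) (ih (by simp))).trans
            (PEq.assoc a (parList (b :: t')) (parList l₂)).symm

theorem parFin_one (f : Fin 1 → PTy) : parFin 1 f = f 0 := rfl

theorem parFin_succ (n : ℕ) (hn : 0 < n) (f : Fin (n+1) → PTy) :
    parFin (n+1) f = PTy.par (f 0) (parFin n (fun i => f i.succ)) := by
  have : List.ofFn (fun i => f i.succ) ≠ [] := by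
    simp [← List.length_eq_zero_iff]; omega
  simp only [parFin, List.ofFn_succ]
  exact parList_cons _ this

-- contexts
theorem ctxEq_refl (Γ : Ctx) : CtxEq Γ Γ := fun _ => CEq.refl _
theorem ctxEq_symm {Γ Δ : Ctx} (h : CtxEq Γ Δ) : CtxEq Δ Γ := fun n => (h n).symm
theorem ctxEq_trans {Γ Δ Θ : Ctx} (h₁ : CtxEq Γ Δ) (h₂ : CtxEq Δ Θ) : CtxEq Γ Θ :=
  fun n => (h₁ n).trans (h₂ n)
theorem ctxEq_of_eq {Γ Δ : Ctx} (h : Γ = Δ) : CtxEq Γ Δ := h ▸ ctxEq_refl Γ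
theorem ctxEq_tens {Γ Γ' Δ Δ' : Ctx} (h₁ : CtxEq Γ Γ') (h₂ : CtxEq Δ Δ') :
    CtxEq (Ctx.tens Γ Δ) (Ctx.tens Γ' Δ') := fun n => CEq.tensCongr (h₁ n) (h₂ n)

def removeAt (k : ℕ) (Δ : Ctx) : Ctx := fun n => if n < k then Δ n else Δ (n+1)

def insertAt (k : ℕ) (σ : CTy) (Δ : Ctx) : Ctx :=
  fun n => if n < k then Δ n else if n = k then σ else Δ (n-1)

theorem insertAt_zero (σ : CTy) (Γ : Ctx) : insertAt 0 σ Γ = Ctx.cons σ Γ := by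
  funext n; cases n <;> simp [insertAt, Ctx.cons]

theorem insertAt_succ (k : ℕ) (σ : CTy) (Γ : Ctx) :
    insertAt (k+1) σ Γ = Ctx.cons (Γ 0) (insertAt k σ (removeAt 0 Γ)) := by
  funext n
  cases n with
  | zero => simp [insertAt, Ctx.cons]
  | succ n =>
      simp only [insertAt, Ctx.cons, removeAt]
      by_cases h1 : n < k
      · simp [h1, Nat.succ_lt_succ h1]
      · by_cases h2 : n = k
        · simp [h2]
        · have h3 : ¬ n + 1 < k + 1 := by omega
          have h4 : n + 1 ≠ k + 1 := by omega
          simp only [if_neg h3, if_neg h4, if_neg h1, if_neg h2,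
            if_neg (Nat.not_lt_zero (n-1))]
          congr 1
          omega

theorem removeAt_cons (c : ℕ) (τ : CTy) (Δ : Ctx) :
    removeAt (c+1) (Ctx.cons τ Δ) = Ctx.cons τ (removeAt c Δ) := by
  funext n
  cases n with
  | zero => simp [removeAt, Ctx.cons]
  | succ n =>
      simp only [removeAt, Ctx.cons]
      by_cases h : n < c
      · simp [h, Nat.succ_lt_succ h]
      · simp [h, fun hh => h (Nat.lt_of_succ_lt_succ hh)]

theorem removeAt_tens (c : ℕ) (Γ Δ : Ctx) :
    removeAt c (Ctx.tens Γ Δ) = Ctx.tens (removeAt c Γ) (removeAt c Δ) := by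
  funext n; simp only [removeAt, Ctx.tens]; split <;> rfl

theorem removeAt_tensCtxFin (c n : ℕ) (Δ : Fin n → Ctx) :
    removeAt c (tensCtxFin n Δ) = tensCtxFin n (fun i => removeAt c (Δ i)) := by
  funext x
  simp only [removeAt, tensCtxFin]
  split <;> rfl

theorem removeAt_ctxEq {Γ Δ : Ctx} (c : ℕ) (h : CtxEq Γ Δ) :
    CtxEq (removeAt c Γ) (removeAt c Δ) := by
  intro n; simp only [removeAt]; split
  · exact h n
  · exact h (n+1)

theorem insertAt_tens (k : ℕ) (σ₁ σ₂ : CTy) (Γ₁ Γ₂ : Ctx) :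
    Ctx.tens (insertAt k σ₁ Γ₁) (insertAt k σ₂ Γ₂)
      = insertAt k (.tens σ₁ σ₂) (Ctx.tens Γ₁ Γ₂) := by
  funext n; simp only [insertAt, Ctx.tens]
  by_cases h1 : n < k
  · simp [h1]
  · by_cases h2 : n = k <;> simp [h1, h2]

theorem insertAt_tensCtxFin (k n : ℕ) (σ : Fin n → CTy) (Γ : Fin n → Ctx) :
    tensCtxFin n (fun i => insertAt k (σ i) (Γ i))
      = insertAt k (tensFin n σ) (tensCtxFin n Γ) := by
  funext x
  simp only [insertAt, tensCtxFin]
  by_cases h1 : x < k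
  · simp [h1]
  · by_cases h2 : x = k <;> simp [h1, h2]

theorem single_one (x : ℕ) : Ctx.single x .one = Ctx.empty := by
  funext n; simp only [Ctx.single, Ctx.empty]; split <;> rfl

theorem tensCtxFin_zero (Δ : Fin 0 → Ctx) : tensCtxFin 0 Δ = Ctx.empty := by
  funext x; rfl

theorem tensCtxFin_succ (n : ℕ) (Δ : Fin (n+1) → Ctx) :
    tensCtxFin (n+1) Δ = Ctx.tens (Δ 0) (tensCtxFin n (fun i => Δ i.succ)) := by
  funext x; simp [tensCtxFin, tensFin_succ, Ctx.tens]

end Infra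


section Infra2

/-- Number of `ofC` leaves of a parallel type. -/
def leaves : PTy → ℕ
  | .ofC _ => 1
  | .par a b => leaves a + leaves b

theorem leaves_pos : ∀ (α : PTy), 1 ≤ leaves α
  | .ofC _ => le_refl 1
  | .par a b => by
      have ha := leaves_pos a
      simp only [leaves]; omega

theorem peq_leaves {α β : PTy} (h : PEq α β) : leaves α = leaves β :=
  PEq.rec (motive_1 := fun _ _ _ => True) (motive_2 := fun a b _ => leaves a = leaves b)
    (fun _ => trivial) (fun _ _ => trivial) (fun _ _ _ _ => trivial) (fun _ _ => trivial)
    (fun _ _ _ => trivial) (fun _ => trivial) (fun _ _ _ _ => trivial) (fun _ _ _ _ => trivial)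
    (fun _ => rfl)
    (fun _ ih => ih.symm)
    (fun _ _ ih₁ ih₂ => ih₁.trans ih₂)
    (fun a b => Nat.add_comm (leaves a) (leaves b))
    (fun a b c => Nat.add_assoc (leaves a) (leaves b) (leaves c))
    (fun _ _ ih₁ ih₂ => by simp only [leaves, ih₁, ih₂])
    (fun _ _ => rfl)
    h

/-- Collapse a parallel type to a computational type (par ↦ tens). -/
def collapse : PTy → CTy
  | .ofC τ => τ
  | .par a b => .tens (collapse a) (collapse b)

theorem peq_collapse {α β : PTy} (h : PEq α β) : CEq (collapse α) (collapse β) :=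
  PEq.rec (motive_1 := fun _ _ _ => True)
    (motive_2 := fun a b _ => CEq (collapse a) (collapse b))
    (fun _ => trivial) (fun _ _ => trivial) (fun _ _ _ _ => trivial) (fun _ _ => trivial)
    (fun _ _ _ => trivial) (fun _ => trivial) (fun _ _ _ _ => trivial) (fun _ _ _ _ => trivial)
    (fun a => CEq.refl (collapse a))
    (fun _ ih => ih.symm)
    (fun _ _ ih₁ ih₂ => ih₁.trans ih₂)
    (fun a b => CEq.comm (collapse a) (collapse b))
    (fun a b c => CEq.assoc (collapse a) (collapse b) (collapse c))
    (fun _ _ ih₁ ih₂ => CEq.tensCongr ih₁ ih₂)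
    (fun hc _ => hc)
    h

theorem peq_ofC_ceq {a b : CTy} (h : PEq (.ofC a) (.ofC b)) : CEq a b := peq_collapse h

theorem leaves_parList {l : List PTy} (h : l ≠ []) :
    leaves (parList l) = (l.map leaves).sum := by
  induction l with
  | nil => exact absurd rfl h
  | cons a t ih =>
      cases t with
      | nil => simp [parList, leaves]
      | cons b t' => rw [parList_cons a (by simp)]; simp [leaves, ih]

/-! ### List-based presentation of the lamI and appE rules -/

abbrev Branch := List (CTy × PTy)

def funCTy (b : Branch) : CTy := tensList (b.map fun p => .arr p.1 p.2)
def argPTy (b : Branch) : PTy := parList (b.map fun p => .ofC p.1)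
def resPTy (b : Branch) : PTy := parList (b.map Prod.snd)
def funsPTy (bs : List Branch) : PTy := parList (bs.map fun b => .ofC (funCTy b))
def ressPTy (bs : List Branch) : PTy := parList (bs.map resPTy)
def tensCtxList (L : List Ctx) : Ctx := fun x => tensList (L.map (· x))

/-- Derivations of the argument of an application, one per branch. -/
inductive ArgsD (N : Tm) : List Branch → List Ctx → List ℕ → Prop
  | nil : ArgsD N [] [] []
  | cons {b bs Γ Γs mm ms} : Deriv Γ N (argPTy b) mm → ArgsD N bs Γs ms →
      ArgsD N (b :: bs) (Γ :: Γs) (mm :: ms)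

/-- Derivations of the body of an abstraction, one per branch element. -/
inductive LamD (M : Tm) : Branch → List Ctx → List ℕ → Prop
  | nil : LamD M [] [] []
  | cons {τ α b Δ Δs mm ms} : Deriv (Ctx.cons τ Δ) M α mm → LamD M b Δs ms →
      LamD M ((τ, α) :: b) (Δ :: Δs) (mm :: ms)

theorem ofFn_get_map {X Y : Type} (l : List X) (g : X → Y) :
    List.ofFn (fun i => g (l.get i)) = l.map g := by
  conv_rhs => rw [← List.ofFn_get l, List.map_ofFn]
  rfl

theorem tensFin_list (b : List CTy) : tensFin b.length b.get = tensList b := by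
  simp only [tensFin]; rw [List.ofFn_get]

theorem parFin_eq_parList {X : Type} (l : List X) (g : X → PTy) :
    parFin l.length (fun i => g (l.get i)) = parList (l.map g) := by
  simp only [parFin]; rw [ofFn_get_map]

theorem tensFin_eq_tensList {X : Type} (l : List X) (g : X → CTy) :
    tensFin l.length (fun i => g (l.get i)) = tensList (l.map g) := by
  simp only [tensFin]; rw [ofFn_get_map]

theorem funsPTy_ofFn {k : ℕ} (F : Fin k → Branch) :
    funsPTy (List.ofFn F) = parFin k (fun i => .ofC (funCTy (F i))) := by
  simp only [funsPTy, parFin, List.map_ofFn]; rfl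

theorem ressPTy_ofFn {k : ℕ} (F : Fin k → Branch) :
    ressPTy (List.ofFn F) = parFin k (fun i => resPTy (F i)) := by
  simp only [ressPTy, parFin, List.map_ofFn]; rfl

theorem funCTy_get (b : Branch) :
    funCTy b = tensFin b.length (fun j => .arr (b.get j).1 (b.get j).2) := by
  rw [funCTy, ← tensFin_eq_tensList b (fun p => .arr p.1 p.2)]

theorem argPTy_get (b : Branch) :
    argPTy b = parFin b.length (fun j => .ofC (b.get j).1) := by
  rw [argPTy, ← parFin_eq_parList b (fun p => .ofC p.1)]

theorem resPTy_get (b : Branch) :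
    resPTy b = parFin b.length (fun j => (b.get j).2) := by
  rw [resPTy, ← parFin_eq_parList b Prod.snd]

theorem tensCtxList_ofFn {k : ℕ} (Γ : Fin k → Ctx) :
    tensCtxList (List.ofFn Γ) = tensCtxFin k Γ := by
  funext x
  simp only [tensCtxList, tensCtxFin, tensFin, List.map_ofFn]
  rfl

theorem tensCtxList_nil : tensCtxList [] = Ctx.empty := rfl

theorem tensCtxList_cons (Γ : Ctx) (L : List Ctx) :
    tensCtxList (Γ :: L) = Ctx.tens Γ (tensCtxList L) := rfl

theorem tensCtxList_append (L₁ L₂ : List Ctx) :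
    CtxEq (tensCtxList (L₁ ++ L₂)) (Ctx.tens (tensCtxList L₁) (tensCtxList L₂)) := by
  intro x
  simp only [tensCtxList, Ctx.tens, List.map_append]
  exact tensList_append _ _

theorem ArgsD.toOfFn {N bs Γs ms} (h : ArgsD N bs Γs ms) :
    ∃ (k : ℕ) (bf : Fin k → Branch) (Γf : Fin k → Ctx) (mf : Fin k → ℕ),
      bs = List.ofFn bf ∧ Γs = List.ofFn Γf ∧ ms = List.ofFn mf ∧
      ∀ i, Deriv (Γf i) N (argPTy (bf i)) (mf i) := by
  induction h with
  | nil => exact ⟨0, Fin.elim0, Fin.elim0, Fin.elim0, by simp, by simp, by simp, fun i => i.elim0⟩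
  | @cons b bs Γ Γs mm ms hd _ ih =>
      obtain ⟨k, bf, Γf, mf, h1, h2, h3, h4⟩ := ih
      refine ⟨k+1, Fin.cons b bf, Fin.cons Γ Γf, Fin.cons mm mf, ?_, ?_, ?_, ?_⟩
      · rw [List.ofFn_succ]; simp [h1]
      · rw [List.ofFn_succ]; simp [h2]
      · rw [List.ofFn_succ]; simp [h3]
      · intro i
        refine Fin.cases ?_ ?_ i
        · simpa using hd
        · intro j; simpa using h4 j

theorem ArgsD.ofFn {N : Tm} {k : ℕ} (bf : Fin k → Branch) (Γf : Fin k → Ctx) (mf : Fin k → ℕ)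
    (h : ∀ i, Deriv (Γf i) N (argPTy (bf i)) (mf i)) :
    ArgsD N (List.ofFn bf) (List.ofFn Γf) (List.ofFn mf) := by
  induction k with
  | zero => simpa using ArgsD.nil
  | succ k ih =>
      rw [List.ofFn_succ, List.ofFn_succ, List.ofFn_succ]
      exact ArgsD.cons (h 0) (ih _ _ _ (fun i => h i.succ))

theorem ArgsD.append {N bs₁ Γs₁ ms₁ bs₂ Γs₂ ms₂} (h₁ : ArgsD N bs₁ Γs₁ ms₁)
    (h₂ : ArgsD N bs₂ Γs₂ ms₂) : ArgsD N (bs₁ ++ bs₂) (Γs₁ ++ Γs₂) (ms₁ ++ ms₂) := by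
  induction h₁ with
  | nil => simpa using h₂
  | cons hd _ ih => exact ArgsD.cons hd ih

theorem LamD.toOfFn {M b Δs ms} (h : LamD M b Δs ms) :
    ∃ (n : ℕ) (τf : Fin n → CTy) (αf : Fin n → PTy) (Δf : Fin n → Ctx) (mf : Fin n → ℕ),
      b = List.ofFn (fun i => (τf i, αf i)) ∧ Δs = List.ofFn Δf ∧ ms = List.ofFn mf ∧
      ∀ i, Deriv (Ctx.cons (τf i) (Δf i)) M (αf i) (mf i) := by
  induction h with
  | nil => exact ⟨0, Fin.elim0, Fin.elim0, Fin.elim0, Fin.elim0, by simp, by simp, by simp,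
      fun i => i.elim0⟩
  | @cons τ α b Δ Δs mm ms hd _ ih =>
      obtain ⟨n, τf, αf, Δf, mf, h1, h2, h3, h4⟩ := ih
      refine ⟨n+1, Fin.cons τ τf, Fin.cons α αf, Fin.cons Δ Δf, Fin.cons mm mf, ?_, ?_, ?_, ?_⟩
      · rw [List.ofFn_succ]; simp [h1]
      · rw [List.ofFn_succ]; simp [h2]
      · rw [List.ofFn_succ]; simp [h3]
      · intro i
        refine Fin.cases ?_ ?_ i
        · simpa using hd
        · intro j; simpa using h4 j

theorem LamD.ofFn {M : Tm} {n : ℕ} (τf : Fin n → CTy) (αf : Fin n → PTy) (Δf : Fin n → Ctx)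
    (mf : Fin n → ℕ) (h : ∀ i, Deriv (Ctx.cons (τf i) (Δf i)) M (αf i) (mf i)) :
    LamD M (List.ofFn (fun i => (τf i, αf i))) (List.ofFn Δf) (List.ofFn mf) := by
  induction n with
  | zero => simpa using LamD.nil
  | succ n ih =>
      rw [List.ofFn_succ, List.ofFn_succ, List.ofFn_succ]
      exact LamD.cons (h 0) (ih _ _ _ _ (fun i => h i.succ))

theorem LamD.append {M b₁ Δs₁ ms₁ b₂ Δs₂ ms₂} (h₁ : LamD M b₁ Δs₁ ms₁)
    (h₂ : LamD M b₂ Δs₂ ms₂) : LamD M (b₁ ++ b₂) (Δs₁ ++ Δs₂) (ms₁ ++ ms₂) := by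
  induction h₁ with
  | nil => simpa using h₂
  | cons hd _ ih => exact LamD.cons hd ih

end Infra2


section Infra3

theorem funCTy_ofFn {n : ℕ} (τ : Fin n → CTy) (α : Fin n → PTy) :
    funCTy (List.ofFn (fun j => (τ j, α j))) = tensFin n (fun j => .arr (τ j) (α j)) := by
  simp only [funCTy, List.map_ofFn, tensFin]; rfl

theorem argPTy_ofFn {n : ℕ} (τ : Fin n → CTy) (α : Fin n → PTy) :
    argPTy (List.ofFn (fun j => (τ j, α j))) = parFin n (fun j => .ofC (τ j)) := by
  simp only [argPTy, List.map_ofFn, parFin]; rfl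

theorem resPTy_ofFn {n : ℕ} (τ : Fin n → CTy) (α : Fin n → PTy) :
    resPTy (List.ofFn (fun j => (τ j, α j))) = parFin n α := by
  simp only [resPTy, List.map_ofFn, parFin]; rfl

theorem sum_ofFn {n : ℕ} (f : Fin n → ℕ) : (List.ofFn f).sum = ∑ i, f i := by
  simp [List.sum_ofFn]

theorem twolen_ofFn {k : ℕ} (bf : Fin k → Branch) :
    ((List.ofFn bf).map fun b => 2 * b.length).sum = ∑ i, 2 * (bf i).length := by
  rw [List.map_ofFn]; simp [List.sum_ofFn]

def twoLenSum (bs : List Branch) : ℕ := (bs.map fun b => 2 * b.length).sum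

theorem twoLenSum_append (bs₁ bs₂ : List Branch) :
    twoLenSum (bs₁ ++ bs₂) = twoLenSum bs₁ + twoLenSum bs₂ := by
  simp [twoLenSum]

theorem twoLenSum_singleton (b : Branch) : twoLenSum [b] = 2 * b.length := by
  simp [twoLenSum]

/-- List form of the appE rule. -/
theorem appE_list {M N : Tm} {bs : List Branch} (hbs : bs ≠ []) (hne : ∀ b ∈ bs, b ≠ [])
    {Δ : Ctx} {Γs : List Ctx} {m0 : ℕ} {ms : List ℕ}
    (hM : Deriv Δ M (funsPTy bs) m0) (hN : ArgsD N bs Γs ms) :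
    Deriv (Ctx.tens Δ (tensCtxList Γs)) (.app M N) (ressPTy bs)
      (m0 + ms.sum + twoLenSum bs - 1) := by
  obtain ⟨k, bf, Γf, mf, hb, hΓ, hm, hder⟩ := hN.toOfFn
  subst hb hΓ hm
  have hk : 0 < k := by
    rcases Nat.eq_zero_or_pos k with h | h
    · subst h; simp at hbs
    · exact h
  have hn : ∀ i, 0 < (bf i).length := by
    intro i
    have : bf i ∈ List.ofFn bf := by
      rw [List.mem_ofFn]; exact ⟨i, rfl⟩
    have := hne _ this
    exact List.length_pos_iff.mpr this
  have h1 : Deriv Δ M (parFin k (fun i => .ofC (tensFin (bf i).length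
      (fun j => .arr ((bf i).get j).1 ((bf i).get j).2)))) m0 := by
    rw [funsPTy_ofFn] at hM
    simpa only [funCTy_get] using hM
  have h2 : ∀ i, Deriv (Γf i) N (parFin (bf i).length
      (fun j => .ofC ((bf i).get j).1)) (mf i) := by
    intro i
    simpa only [argPTy_get] using hder i
  have := Deriv.appE k hk (fun i => (bf i).length) hn
    (fun i j => ((bf i).get j).1) (fun i j => ((bf i).get j).2)
    Δ Γf m0 mf M N h1 h2
  rw [tensCtxList_ofFn, ressPTy_ofFn, sum_ofFn, twoLenSum, twolen_ofFn]
  simpa only [resPTy_get] using this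

/-- List form of the lamI rule. -/
theorem lamI_list {M : Tm} {b : Branch} {Δs : List Ctx} {ms : List ℕ}
    (h : LamD M b Δs ms) :
    Deriv (tensCtxList Δs) (.lam M) (.ofC (funCTy b)) ms.sum := by
  obtain ⟨n, τf, αf, Δf, mf, hb, hΔ, hm, hder⟩ := h.toOfFn
  subst hb hΔ hm
  rw [tensCtxList_ofFn, funCTy_ofFn, sum_ofFn]
  exact Deriv.lamI n Δf τf αf mf M hder

/-- Inversion for variables. -/
theorem varInv {Δ P α m} (h : Deriv Δ P α m) :
    ∀ x, P = .var x → ∃ τ, CtxEq Δ (Ctx.single x τ) ∧ PEq (.ofC τ) α ∧ m = 0 := by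
  induction h with
  | ax y τ =>
      intro x hx
      injection hx with hy
      subst hy
      exact ⟨τ, ctxEq_refl _, PEq.refl _, rfl⟩
  | eqv _ hctx hty ih =>
      intro x hx
      obtain ⟨τ, h1, h2, h3⟩ := ih x hx
      exact ⟨τ, ctxEq_trans (ctxEq_symm hctx) h1, h2.trans hty, h3⟩
  | lamI => intro x hx; exact absurd hx (by simp)
  | appE => intro x hx; exact absurd hx (by simp)
  | plusL => intro x hx; exact absurd hx (by simp)
  | plusR => intro x hx; exact absurd hx (by simp)
  | parI => intro x hx; exact absurd hx (by simp)

/-- Inversion for abstractions. -/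
theorem lamInv {Θ P α m} (h : Deriv Θ P α m) :
    ∀ M, P = .lam M → ∃ b Δs ms, LamD M b Δs ms ∧ CtxEq Θ (tensCtxList Δs) ∧
      PEq (.ofC (funCTy b)) α ∧ m = ms.sum := by
  induction h with
  | lamI n Δf τf αf mf M0 hder =>
      intro M hM
      injection hM with hb
      subst hb
      refine ⟨List.ofFn (fun i => (τf i, αf i)), List.ofFn Δf, List.ofFn mf,
        LamD.ofFn τf αf Δf mf hder, ?_, ?_, ?_⟩
      · rw [tensCtxList_ofFn]; exact ctxEq_refl _
      · rw [funCTy_ofFn]; exact PEq.refl _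
      · rw [sum_ofFn]
  | eqv _ hctx hty ih =>
      intro M hM
      obtain ⟨b, Δs, ms, h1, h2, h3, h4⟩ := ih M hM
      exact ⟨b, Δs, ms, h1, ctxEq_trans (ctxEq_symm hctx) h2, h3.trans hty, h4⟩
  | ax => intro M hM; exact absurd hM (by simp)
  | appE => intro M hM; exact absurd hM (by simp)
  | plusL => intro M hM; exact absurd hM (by simp)
  | plusR => intro M hM; exact absurd hM (by simp)
  | parI => intro M hM; exact absurd hM (by simp)

/-- Inversion for applications. -/
theorem appInv {Δ P α m} (h : Deriv Δ P α m) :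
    ∀ M N, P = .app M N → ∃ bs Δ₀ Γs ms m0, bs ≠ [] ∧ (∀ b ∈ bs, b ≠ []) ∧
      Deriv Δ₀ M (funsPTy bs) m0 ∧ ArgsD N bs Γs ms ∧
      CtxEq Δ (Ctx.tens Δ₀ (tensCtxList Γs)) ∧ PEq (ressPTy bs) α ∧
      m = m0 + ms.sum + twoLenSum bs - 1 := by
  induction h with
  | appE k hk nf hn τ α Δ Γ m0 ms M0 N0 hM hN =>
      intro M N hMN
      injection hMN with h1 h2
      subst h1 h2
      refine ⟨List.ofFn (fun i => List.ofFn (fun j => (τ i j, α i j))),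
        Δ, List.ofFn Γ, List.ofFn ms, m0, ?_, ?_, ?_, ?_, ?_, ?_, ?_⟩
      · simp only [ne_eq, ← List.length_eq_zero_iff, List.length_ofFn]; omega
      · intro b hb
        rw [List.mem_ofFn] at hb
        obtain ⟨i, rfl⟩ := hb
        simp only [ne_eq, ← List.length_eq_zero_iff, List.length_ofFn]
        have := hn i; omega
      · rw [funsPTy_ofFn]
        simpa only [funCTy_ofFn] using hM
      · exact ArgsD.ofFn _ Γ ms (fun i => by simpa only [argPTy_ofFn] using hN i)
      · rw [tensCtxList_ofFn]; exact ctxEq_refl _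
      · rw [ressPTy_ofFn]
        simp only [resPTy_ofFn]
        exact PEq.refl _
      · rw [sum_ofFn, twoLenSum, twolen_ofFn]; simp [List.length_ofFn]
  | eqv _ hctx hty ih =>
      intro M N hMN
      obtain ⟨bs, Δ₀, Γs, ms, m0, h1, h2, h3, h4, h5, h6, h7⟩ := ih M N hMN
      exact ⟨bs, Δ₀, Γs, ms, m0, h1, h2, h3, h4, ctxEq_trans (ctxEq_symm hctx) h5,
        h6.trans hty, h7⟩
  | ax => intro M N hMN; exact absurd hMN (by simp)
  | lamI => intro M N hMN; exact absurd hMN (by simp)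
  | plusL => intro M N hMN; exact absurd hMN (by simp)
  | plusR => intro M N hMN; exact absurd hMN (by simp)
  | parI => intro M N hMN; exact absurd hMN (by simp)

/-- Inversion for parallel compositions. -/
theorem parInv {Δ P α m} (h : Deriv Δ P α m) :
    ∀ M N, P = .par M N → ∃ Δ₁ Δ₂ α₁ α₂ m₁ m₂, Deriv Δ₁ M α₁ m₁ ∧ Deriv Δ₂ N α₂ m₂ ∧
      CtxEq Δ (Ctx.tens Δ₁ Δ₂) ∧ PEq (.par α₁ α₂) α ∧ m = m₁ + m₂ := by
  induction h with
  | parI hM hN =>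
      intro M N hMN
      injection hMN with h1 h2
      subst h1 h2
      exact ⟨_, _, _, _, _, _, hM, hN, ctxEq_refl _, PEq.refl _, rfl⟩
  | eqv _ hctx hty ih =>
      intro M N hMN
      obtain ⟨Δ₁, Δ₂, α₁, α₂, m₁, m₂, h1, h2, h3, h4, h5⟩ := ih M N hMN
      exact ⟨Δ₁, Δ₂, α₁, α₂, m₁, m₂, h1, h2, ctxEq_trans (ctxEq_symm hctx) h3,
        h4.trans hty, h5⟩
  | ax => intro M N hMN; exact absurd hMN (by simp)
  | lamI => intro M N hMN; exact absurd hMN (by simp)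
  | appE => intro M N hMN; exact absurd hMN (by simp)
  | plusL => intro M N hMN; exact absurd hMN (by simp)
  | plusR => intro M N hMN; exact absurd hMN (by simp)

/-- Values only get types with a single leaf. -/
theorem value_leaves_one {Δ W β m} (h : Deriv Δ W β m) (hv : IsValue W) :
    leaves β = 1 := by
  induction h with
  | ax => rfl
  | lamI => rfl
  | appE => exact absurd hv (by simp [IsValue])
  | plusL => exact absurd hv (by simp [IsValue])
  | plusR => exact absurd hv (by simp [IsValue])
  | parI => exact absurd hv (by simp [IsValue])
  | eqv _ _ hty ih => rw [← peq_leaves hty]; exact ih hv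

theorem value_ofC {Δ W β m} (h : Deriv Δ W β m) (hv : IsValue W) :
    PEq β (.ofC (collapse β)) := by
  have h1 := value_leaves_one h hv
  cases β with
  | ofC τ => exact PEq.refl _
  | par a b =>
      exfalso
      have ha := leaves_pos a
      have hb := leaves_pos b
      simp only [leaves] at h1
      omega

end Infra3


section Infra4

theorem ceq_tens_one_of {a b : CTy} (h₁ : CEq a .one) (h₂ : CEq b .one) :
    CEq (.tens a b) .one := (CEq.tensCongr h₁ h₂).trans (CEq.unit _)

theorem ceq_one_to_tens {a b : CTy} (h₁ : CEq .one a) (h₂ : CEq .one b) :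
    CEq .one (.tens a b) := (ceq_tens_one_of h₁.symm h₂.symm).symm

/-- Any value can be given the unit type in the empty context. -/
theorem valueUnit {V : Tm} (hv : IsValue V) : Deriv Ctx.empty V (.ofC .one) 0 := by
  cases V with
  | var x =>
      have := Deriv.ax x .one
      rwa [single_one] at this
  | lam M =>
      have := Deriv.lamI 0 Fin.elim0 Fin.elim0 Fin.elim0 Fin.elim0 M (fun i => i.elim0)
      rw [tensCtxFin_zero] at this
      simpa [tensFin_zero] using this
  | app _ _ => exact absurd hv (by simp [IsValue])
  | plus _ _ => exact absurd hv (by simp [IsValue])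
  | par _ _ => exact absurd hv (by simp [IsValue])

/-- Two derivations of a value merge into one at the tensored type. -/
theorem mergeVal {V : Tm} (hv : IsValue V) {Θ₁ Θ₂ : Ctx} {τ₁ τ₂ : CTy} {m₁ m₂ : ℕ}
    (h₁ : Deriv Θ₁ V (.ofC τ₁) m₁) (h₂ : Deriv Θ₂ V (.ofC τ₂) m₂) :
    Deriv (Ctx.tens Θ₁ Θ₂) V (.ofC (.tens τ₁ τ₂)) (m₁ + m₂) := by
  cases V with
  | var x =>
      obtain ⟨σ₁, hc₁, hp₁, hm₁⟩ := varInv h₁ x rfl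
      obtain ⟨σ₂, hc₂, hp₂, hm₂⟩ := varInv h₂ x rfl
      subst hm₁ hm₂
      refine Deriv.eqv (Deriv.ax x (.tens σ₁ σ₂)) ?_ (PEq.ofC (CEq.tensCongr
        (peq_ofC_ceq hp₁) (peq_ofC_ceq hp₂)))
      intro n
      simp only [Ctx.single, Ctx.tens]
      by_cases hx : n = x
      · subst hx
        have e₁ : CEq (Θ₁ n) σ₁ := by simpa [Ctx.single] using hc₁ n
        have e₂ : CEq (Θ₂ n) σ₂ := by simpa [Ctx.single] using hc₂ n
        simp only [if_pos rfl]
        exact CEq.tensCongr e₁.symm e₂.symm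
      · have e₁ : CEq (Θ₁ n) .one := by simpa [Ctx.single, hx] using hc₁ n
        have e₂ : CEq (Θ₂ n) .one := by simpa [Ctx.single, hx] using hc₂ n
        simp only [if_neg hx]
        exact ceq_one_to_tens e₁.symm e₂.symm
  | lam M =>
      obtain ⟨b₁, Δs₁, ms₁, hl₁, hc₁, hp₁, hm₁⟩ := lamInv h₁ M rfl
      obtain ⟨b₂, Δs₂, ms₂, hl₂, hc₂, hp₂, hm₂⟩ := lamInv h₂ M rfl
      subst hm₁ hm₂
      have hd := lamI_list (hl₁.append hl₂)
      rw [List.sum_append] at hd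
      refine Deriv.eqv hd ?_ ?_
      · exact ctxEq_trans (tensCtxList_append _ _)
          (ctxEq_tens (ctxEq_symm hc₁) (ctxEq_symm hc₂))
      · refine PEq.trans (PEq.ofC ?_) (PEq.refl _)
        have : CEq (funCTy (b₁ ++ b₂)) (.tens (funCTy b₁) (funCTy b₂)) := by
          simp only [funCTy, List.map_append]
          exact tensList_append _ _
        exact this.trans (CEq.tensCongr (peq_ofC_ceq hp₁) (peq_ofC_ceq hp₂))
      
  | app _ _ => exact absurd hv (by simp [IsValue])
  | plus _ _ => exact absurd hv (by simp [IsValue])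
  | par _ _ => exact absurd hv (by simp [IsValue])

/-- `(ms₁ ++ ms₂).sum`. -/
theorem mergeVal_sum (ms₁ ms₂ : List ℕ) : (ms₁ ++ ms₂).sum = ms₁.sum + ms₂.sum :=
  List.sum_append

/-- n-ary merging of value derivations. -/
theorem mergeValFin {V : Tm} (hv : IsValue V) : ∀ {n : ℕ} {Θ : Fin n → Ctx}
    {σ : Fin n → CTy} {mv : Fin n → ℕ},
    (∀ i, Deriv (Θ i) V (.ofC (σ i)) (mv i)) →
    Deriv (tensCtxFin n Θ) V (.ofC (tensFin n σ)) (∑ i, mv i) := by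
  intro n
  induction n with
  | zero =>
      intro Θ σ mv _
      rw [tensCtxFin_zero, tensFin_zero]
      simpa using valueUnit hv
  | succ n ih =>
      intro Θ σ mv h
      rw [tensCtxFin_succ, tensFin_succ, Fin.sum_univ_succ]
      exact mergeVal hv (h 0) (ih (fun i => h i.succ))

/-- Strengthening: a typing of a shifted term gives a typing of the term. -/
theorem unshift {Θ P β m} (h : Deriv Θ P β m) :
    ∀ c W, P = shiftTm c W → Deriv (removeAt c Θ) W β m ∧ CEq (Θ c) .one := by
  induction h with
  | ax x τ =>
      intro c W hW
      cases W with
      | lam w => exact absurd hW (by simp [shiftTm])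
      | app w₁ w₂ => exact absurd hW (by simp [shiftTm])
      | plus w₁ w₂ => exact absurd hW (by simp [shiftTm])
      | par w₁ w₂ => exact absurd hW (by simp [shiftTm])
      | var w =>
        simp only [shiftTm] at hW
        by_cases hwc : w < c
        · rw [if_pos hwc] at hW
          injection hW with hx
          subst hx
          constructor
          · have : removeAt c (Ctx.single x τ) = Ctx.single x τ := by
              funext p
              simp only [removeAt, Ctx.single]
              by_cases hp : p < c
              · rw [if_pos hp]
              · have h9 : ¬ p + 1 = x := by omega
                have h8 : ¬ p = x := by omega
                simp only [if_neg h9, if_neg h8]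
                rw [if_neg hp]
            rw [this]
            exact Deriv.ax x τ
          · have : Ctx.single x τ c = .one := by
              simp only [Ctx.single]
              rw [if_neg (by omega : ¬ c = x)]
            rw [this]
            exact CEq.refl _
        · rw [if_neg hwc] at hW
          injection hW with hx
          subst hx
          constructor
          · have : removeAt c (Ctx.single (w+1) τ) = Ctx.single w τ := by
              funext p
              simp only [removeAt, Ctx.single]
              by_cases hp : p < c
              · rw [if_pos hp, if_neg (by omega : ¬ p = w + 1), if_neg (by omega : ¬ p = w)]
              · rw [if_neg hp]
                by_cases hpw : p = w
                · rw [if_pos (by omega : p + 1 = w + 1), if_pos hpw]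
                · rw [if_neg (by omega : ¬ p + 1 = w + 1), if_neg hpw]
            rw [this]
            exact Deriv.ax w τ
          · have : Ctx.single (w+1) τ c = .one := by
              simp only [Ctx.single]
              rw [if_neg (by omega : ¬ c = w + 1)]
            rw [this]
            exact CEq.refl _
  | lamI n Δf τf αf mf M0 hder ih =>
      intro c W hW
      cases W with
      | var w =>
          simp only [shiftTm] at hW
          split at hW <;> exact absurd hW (by simp)
      | app w₁ w₂ => exact absurd hW (by simp [shiftTm])
      | plus w₁ w₂ => exact absurd hW (by simp [shiftTm])
      | par w₁ w₂ => exact absurd hW (by simp [shiftTm])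
      | lam w =>
        simp only [shiftTm] at hW
        injection hW with hb
        subst hb
        constructor
        · rw [removeAt_tensCtxFin]
          refine Deriv.lamI n (fun i => removeAt c (Δf i)) τf αf mf w (fun i => ?_)
          have := (ih i (c+1) w rfl).1
          rwa [removeAt_cons] at this
        · exact tensFin_ones (fun i => (ih i (c+1) w rfl).2)
  | appE k hk nf hn τ α Δ Γ m0 ms M0 N0 hM hN ihM ihN =>
      intro c W hW
      cases W with
      | var w =>
          simp only [shiftTm] at hW
          split at hW <;> exact absurd hW (by simp)
      | lam w => exact absurd hW (by simp [shiftTm])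
      | plus w₁ w₂ => exact absurd hW (by simp [shiftTm])
      | par w₁ w₂ => exact absurd hW (by simp [shiftTm])
      | app w₁ w₂ =>
        simp only [shiftTm, Tm.app.injEq, Tm.plus.injEq, Tm.par.injEq] at hW
        obtain ⟨h1, h2⟩ := hW
        constructor
        · rw [removeAt_tens, removeAt_tensCtxFin]
          exact Deriv.appE k hk nf hn τ α (removeAt c Δ) (fun i => removeAt c (Γ i))
            m0 ms w₁ w₂ (ihM c w₁ h1).1 (fun i => (ihN i c w₂ h2).1)
        · exact ceq_tens_one_of (ihM c w₁ h1).2 (tensFin_ones (fun i => (ihN i c w₂ h2).2))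
  | plusL N0 hM ih =>
      intro c W hW
      cases W with
      | var w =>
          simp only [shiftTm] at hW
          split at hW <;> exact absurd hW (by simp)
      | lam w => exact absurd hW (by simp [shiftTm])
      | app w₁ w₂ => exact absurd hW (by simp [shiftTm])
      | par w₁ w₂ => exact absurd hW (by simp [shiftTm])
      | plus w₁ w₂ =>
        simp only [shiftTm, Tm.app.injEq, Tm.plus.injEq, Tm.par.injEq] at hW
        obtain ⟨h1, h2⟩ := hW
        exact ⟨Deriv.plusL _ (ih c w₁ h1).1, (ih c w₁ h1).2⟩
  | plusR M0 hN ih =>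
      intro c W hW
      cases W with
      | var w =>
          simp only [shiftTm] at hW
          split at hW <;> exact absurd hW (by simp)
      | lam w => exact absurd hW (by simp [shiftTm])
      | app w₁ w₂ => exact absurd hW (by simp [shiftTm])
      | par w₁ w₂ => exact absurd hW (by simp [shiftTm])
      | plus w₁ w₂ =>
        simp only [shiftTm, Tm.app.injEq, Tm.plus.injEq, Tm.par.injEq] at hW
        obtain ⟨h1, h2⟩ := hW
        exact ⟨Deriv.plusR _ (ih c w₂ h2).1, (ih c w₂ h2).2⟩
  | parI hM hN ihM ihN =>
      intro c W hW
      cases W with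
      | var w =>
          simp only [shiftTm] at hW
          split at hW <;> exact absurd hW (by simp)
      | lam w => exact absurd hW (by simp [shiftTm])
      | app w₁ w₂ => exact absurd hW (by simp [shiftTm])
      | plus w₁ w₂ => exact absurd hW (by simp [shiftTm])
      | par w₁ w₂ =>
        simp only [shiftTm, Tm.app.injEq, Tm.plus.injEq, Tm.par.injEq] at hW
        obtain ⟨h1, h2⟩ := hW
        constructor
        · rw [removeAt_tens]
          exact Deriv.parI (ihM c w₁ h1).1 (ihN c w₂ h2).1
        · exact ceq_tens_one_of (ihM c w₁ h1).2 (ihN c w₂ h2).2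
  | eqv hd hctx hty ih =>
      intro c W hW
      obtain ⟨h1, h2⟩ := ih c W hW
      exact ⟨Deriv.eqv h1 (removeAt_ctxEq c hctx) hty,
        ((hctx c).symm).trans h2⟩

end Infra4


section Infra5

theorem isValue_shift (c : ℕ) {V : Tm} (hv : IsValue V) : IsValue (shiftTm c V) := by
  cases V with
  | var n => simp only [shiftTm]; split <;> trivial
  | lam M => trivial
  | app _ _ => exact absurd hv (by simp [IsValue])
  | plus _ _ => exact absurd hv (by simp [IsValue])
  | par _ _ => exact absurd hv (by simp [IsValue])

theorem insertAt_empty (k : ℕ) (σ : CTy) : insertAt k σ Ctx.empty = Ctx.single k σ := by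
  funext p
  simp only [insertAt, Ctx.single, Ctx.empty]
  by_cases h1 : p < k
  · rw [if_pos h1, if_neg (by omega : ¬ p = k)]
  · by_cases h2 : p = k
    · simp [h1, h2]
    · simp [h1, h2]

theorem insertAt_one_lt {k x : ℕ} (h : k < x) (τ : CTy) :
    insertAt k .one (Ctx.single (x-1) τ) = Ctx.single x τ := by
  funext p
  simp only [insertAt, Ctx.single]
  by_cases h1 : p < k
  · rw [if_pos h1, if_neg (by omega : ¬ p = x - 1), if_neg (by omega : ¬ p = x)]
  · by_cases h2 : p = k
    · rw [if_neg h1, if_pos h2, if_neg (by omega : ¬ p = x)]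
    · rw [if_neg h1, if_neg h2]
      by_cases h3 : p = x
      · rw [if_pos (by omega : p - 1 = x - 1), if_pos h3]
      · rw [if_neg (by omega : ¬ p - 1 = x - 1), if_neg h3]

theorem insertAt_one_ge {k x : ℕ} (h : x < k) (τ : CTy) :
    insertAt k .one (Ctx.single x τ) = Ctx.single x τ := by
  funext p
  simp only [insertAt, Ctx.single]
  by_cases h1 : p < k
  · rw [if_pos h1]
  · by_cases h2 : p = k
    · rw [if_neg h1, if_pos h2, if_neg (by omega : ¬ p = x)]
    · rw [if_neg h1, if_neg h2, if_neg (by omega : ¬ p - 1 = x), if_neg (by omega : ¬ p = x)]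

theorem removeAt_zero (X : Ctx) (p : ℕ) : removeAt 0 X p = X (p+1) :=
  if_neg (Nat.not_lt_zero p)

/-- Anti-substitution for a variable. -/
theorem antisubst_var {Δ : Ctx} {α : PTy} {m : ℕ} (x k : ℕ) (V : Tm) (hv : IsValue V)
    (h : Deriv Δ (substTm (.var x) k V) α m) :
    ∃ σ Γ Θ mM mV, Deriv (insertAt k σ Γ) (.var x) α mM ∧ Deriv Θ V (.ofC σ) mV ∧
      CtxEq Δ (Ctx.tens Γ Θ) ∧ m = mM + mV := by
  by_cases hxk : x = k
  · subst hxk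
    simp only [substTm, if_pos rfl] at h
    have hofc := value_ofC h hv
    refine ⟨collapse α, Ctx.empty, Δ, 0, m, ?_, Deriv.eqv h (ctxEq_refl _) hofc, ?_, ?_⟩
    · refine Deriv.eqv (Deriv.ax x (collapse α)) ?_ hofc.symm
      rw [← insertAt_empty]
      exact ctxEq_refl _
    · intro p
      exact (ceq_one_tens (Δ p)).symm
    · omega
  · simp only [substTm, if_neg hxk] at h
    by_cases hkx : k < x
    · rw [if_pos hkx] at h
      obtain ⟨τ, hΔ, hty, hm⟩ := varInv h (x-1) rfl
      refine ⟨.one, Ctx.single (x-1) τ, Ctx.empty, 0, 0, ?_, valueUnit hv, ?_, by omega⟩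
      · refine Deriv.eqv (Deriv.ax x τ) ?_ hty
        rw [insertAt_one_lt hkx]
        exact ctxEq_refl _
      · intro p
        exact (hΔ p).trans (CEq.unit _).symm
    · rw [if_neg hkx] at h
      obtain ⟨τ, hΔ, hty, hm⟩ := varInv h x rfl
      refine ⟨.one, Ctx.single x τ, Ctx.empty, 0, 0, ?_, valueUnit hv, ?_, by omega⟩
      · refine Deriv.eqv (Deriv.ax x τ) ?_ hty
        rw [insertAt_one_ge (by omega : x < k)]
        exact ctxEq_refl _
      · intro p
        exact (hΔ p).trans (CEq.unit _).symm

/-- Quantitative anti-substitution. -/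
theorem antisubst {Δ : Ctx} {P : Tm} {α : PTy} {m : ℕ} (h : Deriv Δ P α m) :
    ∀ M k V, IsValue V → substTm M k V = P →
    ∃ σ Γ Θ mM mV, Deriv (insertAt k σ Γ) M α mM ∧ Deriv Θ V (.ofC σ) mV ∧
      CtxEq Δ (Ctx.tens Γ Θ) ∧ m = mM + mV := by
  induction h with
  | ax x τ =>
      intro M k V hv hs
      cases M with
      | var y =>
          refine antisubst_var y k V hv ?_
          rw [hs]; exact Deriv.ax x τ
      | lam _ => simp [substTm] at hs
      | app _ _ => simp [substTm] at hs
      | plus _ _ => simp [substTm] at hs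
      | par _ _ => simp [substTm] at hs
  | lamI n Δf τf αf mf M0 hder ih =>
      intro M k V hv hs
      cases M with
      | var y =>
          refine antisubst_var y k V hv ?_
          rw [hs]; exact Deriv.lamI n Δf τf αf mf M0 hder
      | lam M' =>
          simp only [substTm] at hs
          injection hs with hb
          subst hb
          have hv' := isValue_shift 0 hv
          choose σg Γg Θg mMg mVg hA hB hC hD using fun i => ih i M' (k+1) (shiftTm 0 V) hv' rfl
          -- strengthen the V-derivations
          have hBV : ∀ i, Deriv (removeAt 0 (Θg i)) V (.ofC (σg i)) (mVg i) :=
            fun i => (unshift (hB i) 0 V rfl).1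
          have hΘ0 : ∀ i, CEq (Θg i 0) .one := fun i => (unshift (hB i) 0 V rfl).2
          have hVm := mergeValFin hv hBV
          -- rebuild the abstraction
          have hA' : ∀ i, Deriv (Ctx.cons (Γg i 0) (insertAt k (σg i) (removeAt 0 (Γg i))))
              M' (αf i) (mMg i) := by
            intro i
            have := hA i
            rwa [insertAt_succ] at this
          have hlam := Deriv.lamI n (fun i => insertAt k (σg i) (removeAt 0 (Γg i)))
            (fun i => Γg i 0) αf mMg M' hA'
          rw [insertAt_tensCtxFin] at hlam
          have hΓτ : ∀ i, CEq (Γg i 0) (τf i) := by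
            intro i
            have h1 : CEq (τf i) (.tens (Γg i 0) (Θg i 0)) := hC i 0
            exact (h1.trans ((CEq.tensCongr (CEq.refl _) (hΘ0 i)).trans (CEq.unit _))).symm
          refine ⟨tensFin n σg, tensCtxFin n (fun i => removeAt 0 (Γg i)),
            tensCtxFin n (fun i => removeAt 0 (Θg i)), ∑ i, mMg i, ∑ i, mVg i, ?_, hVm, ?_, ?_⟩
          · refine Deriv.eqv hlam (ctxEq_refl _) (PEq.ofC (ceq_tensFin_congr (fun i =>
              CEq.arrCongr (hΓτ i) (PEq.refl (αf i)))))
          · intro p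
            have h1 : ∀ i, CEq (Δf i p) (.tens (removeAt 0 (Γg i) p) (removeAt 0 (Θg i) p)) := by
              intro i
              have := hC i (p+1)
              rw [removeAt_zero, removeAt_zero]
              exact this
            exact (ceq_tensFin_congr h1).trans (tensFin_tens n _ _)
          · calc (∑ i, mf i) = ∑ i, (mMg i + mVg i) := by
                  exact Finset.sum_congr rfl (fun i _ => hD i)
              _ = (∑ i, mMg i) + (∑ i, mVg i) := Finset.sum_add_distrib
      | app _ _ => simp [substTm] at hs
      | plus _ _ => simp [substTm] at hs
      | par _ _ => simp [substTm] at hs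
  | appE k0 hk nf hn τ α Δ0 Γ0 m0 ms M0 N0 hM hN ihM ihN =>
      intro M k V hv hs
      cases M with
      | var y =>
          refine antisubst_var y k V hv ?_
          rw [hs]; exact Deriv.appE k0 hk nf hn τ α Δ0 Γ0 m0 ms M0 N0 hM hN
      | app M₁ N₁ =>
          simp only [substTm] at hs
          injection hs with h1 h2
          subst h1 h2
          obtain ⟨σ₀, Γg₀, Θ₀, mM₀, mV₀, A₀, B₀, C₀, D₀⟩ := ihM M₁ k V hv rfl
          choose σg Γg Θg mMg mVg hA hB hC hD using fun i => ihN i N₁ k V hv rfl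
          have happ := Deriv.appE k0 hk nf hn τ α (insertAt k σ₀ Γg₀)
            (fun i => insertAt k (σg i) (Γg i)) mM₀ mMg M₁ N₁ A₀ hA
          rw [insertAt_tensCtxFin, insertAt_tens] at happ
          have hVm := mergeVal hv B₀ (mergeValFin hv hB)
          have hpos : 1 ≤ ∑ i, 2 * nf i := by
            have : (0 : ℕ) < ∑ i, 2 * nf i :=
              Finset.sum_pos (fun i _ => by have := hn i; omega) ⟨⟨0, hk⟩, Finset.mem_univ _⟩
            omega
          refine ⟨.tens σ₀ (tensFin k0 σg), Ctx.tens Γg₀ (tensCtxFin k0 Γg),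
            Ctx.tens Θ₀ (tensCtxFin k0 Θg),
            mM₀ + (∑ i, mMg i) + (∑ i, 2 * nf i) - 1, mV₀ + ∑ i, mVg i, happ, hVm, ?_, ?_⟩
          · intro p
            have e0 : CEq (Δ0 p) (.tens (Γg₀ p) (Θ₀ p)) := C₀ p
            have e1 : CEq (tensFin k0 (fun i => Γ0 i p))
                (.tens (tensFin k0 (fun i => Γg i p)) (tensFin k0 (fun i => Θg i p))) :=
              (ceq_tensFin_congr (fun i => hC i p)).trans (tensFin_tens k0 _ _)
            exact (CEq.tensCongr e0 e1).trans (tens_tens_comm _ _ _ _)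
          · have hms : (∑ i, ms i) = (∑ i, mMg i) + (∑ i, mVg i) := by
              calc (∑ i, ms i) = ∑ i, (mMg i + mVg i) :=
                    Finset.sum_congr rfl (fun i _ => hD i)
                _ = (∑ i, mMg i) + (∑ i, mVg i) := Finset.sum_add_distrib
            omega
      | lam _ => simp [substTm] at hs
      | plus _ _ => simp [substTm] at hs
      | par _ _ => simp [substTm] at hs
  | plusL N0 hM ih =>
      intro M k V hv hs
      cases M with
      | var y =>
          refine antisubst_var y k V hv ?_
          rw [hs]; exact Deriv.plusL N0 hM
      | plus M₁ N₁ =>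
          simp only [substTm] at hs
          injection hs with h1 h2
          subst h1 h2
          obtain ⟨σ, Γ, Θ, mM, mV, A, B, C, D⟩ := ih M₁ k V hv rfl
          exact ⟨σ, Γ, Θ, mM + 1, mV, Deriv.plusL N₁ A, B, C, by omega⟩
      | lam _ => simp [substTm] at hs
      | app _ _ => simp [substTm] at hs
      | par _ _ => simp [substTm] at hs
  | plusR M0 hN ih =>
      intro M k V hv hs
      cases M with
      | var y =>
          refine antisubst_var y k V hv ?_
          rw [hs]; exact Deriv.plusR M0 hN
      | plus M₁ N₁ =>
          simp only [substTm] at hs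
          injection hs with h1 h2
          subst h1 h2
          obtain ⟨σ, Γ, Θ, mM, mV, A, B, C, D⟩ := ih N₁ k V hv rfl
          exact ⟨σ, Γ, Θ, mM + 1, mV, Deriv.plusR M₁ A, B, C, by omega⟩
      | lam _ => simp [substTm] at hs
      | app _ _ => simp [substTm] at hs
      | par _ _ => simp [substTm] at hs
  | parI hM hN ihM ihN =>
      intro M k V hv hs
      cases M with
      | var y =>
          refine antisubst_var y k V hv ?_
          rw [hs]; exact Deriv.parI hM hN
      | par M₁ N₁ =>
          simp only [substTm] at hs
          injection hs with h1 h2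
          subst h1 h2
          obtain ⟨σ₁, Γ₁, Θ₁, mM₁, mV₁, A₁, B₁, C₁, D₁⟩ := ihM M₁ k V hv rfl
          obtain ⟨σ₂, Γ₂, Θ₂, mM₂, mV₂, A₂, B₂, C₂, D₂⟩ := ihN N₁ k V hv rfl
          have hpar := Deriv.parI A₁ A₂
          rw [insertAt_tens] at hpar
          refine ⟨.tens σ₁ σ₂, Ctx.tens Γ₁ Γ₂, Ctx.tens Θ₁ Θ₂, mM₁ + mM₂, mV₁ + mV₂,
            hpar, mergeVal hv B₁ B₂, ?_, by omega⟩
          intro p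
          exact (CEq.tensCongr (C₁ p) (C₂ p)).trans (tens_tens_comm _ _ _ _)
      | lam _ => simp [substTm] at hs
      | app _ _ => simp [substTm] at hs
      | plus _ _ => simp [substTm] at hs
  | eqv hd hctx hty ih =>
      intro M k V hv hs
      obtain ⟨σ, Γ, Θ, mM, mV, A, B, C, D⟩ := ih M k V hv hs
      exact ⟨σ, Γ, Θ, mM, mV, Deriv.eqv A (ctxEq_refl _) hty, B,
        ctxEq_trans (ctxEq_symm hctx) C, D⟩

end Infra5


section Infra6

theorem map_ne_nil {X Y : Type} {l : List X} (h : l ≠ []) (f : X → Y) : l.map f ≠ [] := by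
  cases l with
  | nil => exact absurd rfl h
  | cons a t => simp

theorem funsPTy_append {bs₁ bs₂ : List Branch} (h₁ : bs₁ ≠ []) (h₂ : bs₂ ≠ []) :
    PEq (funsPTy (bs₁ ++ bs₂)) (.par (funsPTy bs₁) (funsPTy bs₂)) := by
  simp only [funsPTy, List.map_append]
  exact parList_append (map_ne_nil h₁ _) (map_ne_nil h₂ _)

theorem ressPTy_append {bs₁ bs₂ : List Branch} (h₁ : bs₁ ≠ []) (h₂ : bs₂ ≠ []) :
    PEq (ressPTy (bs₁ ++ bs₂)) (.par (ressPTy bs₁) (ressPTy bs₂)) := by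
  simp only [ressPTy, List.map_append]
  exact parList_append (map_ne_nil h₁ _) (map_ne_nil h₂ _)

theorem argPTy_append {b₁ b₂ : Branch} (h₁ : b₁ ≠ []) (h₂ : b₂ ≠ []) :
    PEq (argPTy (b₁ ++ b₂)) (.par (argPTy b₁) (argPTy b₂)) := by
  simp only [argPTy, List.map_append]
  exact parList_append (map_ne_nil h₁ _) (map_ne_nil h₂ _)

theorem resPTy_append {b₁ b₂ : Branch} (h₁ : b₁ ≠ []) (h₂ : b₂ ≠ []) :
    PEq (resPTy (b₁ ++ b₂)) (.par (resPTy b₁) (resPTy b₂)) := by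
  simp only [resPTy, List.map_append]
  exact parList_append (map_ne_nil h₁ _) (map_ne_nil h₂ _)

theorem funCTy_append (b₁ b₂ : Branch) :
    CEq (funCTy (b₁ ++ b₂)) (.tens (funCTy b₁) (funCTy b₂)) := by
  simp only [funCTy, List.map_append]
  exact tensList_append _ _

theorem twolen_pos {bs : List Branch} (h : bs ≠ []) (hne : ∀ b ∈ bs, b ≠ []) :
    2 ≤ twoLenSum bs := by
  rw [twoLenSum]
  cases bs with
  | nil => exact absurd rfl h
  | cons b t =>
      have : b ≠ [] := hne b (by simp)
      have hb : 1 ≤ b.length := List.length_pos_iff.mpr this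
      simp only [List.map_cons, List.sum_cons]
      omega

theorem leaves_funsPTy {bs : List Branch} (h : bs ≠ []) :
    leaves (funsPTy bs) = bs.length := by
  rw [funsPTy, leaves_parList (map_ne_nil h _)]
  induction bs with
  | nil => rfl
  | cons b t ih =>
      simp only [List.map_cons, List.sum_cons, List.length_cons, leaves]
      cases t with
      | nil => rfl
      | cons c t' => rw [ih (by simp)]; omega

theorem funsPTy_singleton (b : Branch) : funsPTy [b] = .ofC (funCTy b) := rfl
theorem ressPTy_singleton (b : Branch) : ressPTy [b] = resPTy b := rfl

end Infra6


theorem Deriv.cast {Δ : Ctx} {T : Tm} {α : PTy} {m m' : ℕ} (h : Deriv Δ T α m)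
    (e : m = m') : Deriv Δ T α m' := e ▸ h

theorem tensFin_one (f : Fin 1 → CTy) : tensFin 1 f = .tens (f 0) .one := rfl

theorem subject_expansion (b : Bool) (M N : Tm) (Δ : Ctx) (α : PTy) (m : ℕ)
    (hstep : Step b M N) (hπ : Deriv Δ N α m) : Deriv Δ M α (m + 1) := by
  revert hπ
  induction hstep generalizing Δ α m with
  | @beta M0 V hv =>
      intro hπ
      obtain ⟨σ, Γ, Θ, mM, mV, A, B, C, D⟩ := antisubst hπ M0 0 V hv rfl
      rw [insertAt_zero] at A
      have hlam := Deriv.lamI 1 (fun _ => Γ) (fun _ => σ) (fun _ => α) (fun _ => mM) M0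
        (fun _ => A)
      have hfun : Deriv (tensCtxFin 1 (fun _ => Γ)) (.lam M0)
          (parFin 1 (fun _ => .ofC (tensFin 1 (fun _ => .arr σ α)))) mM := by
        rw [parFin_one]
        simpa using hlam
      have harg : ∀ i : Fin 1, Deriv ((fun _ => Θ) i) V
          (parFin 1 (fun _ => .ofC σ)) ((fun _ => mV) i) := by
        intro i; rw [parFin_one]; exact B
      have happ := Deriv.appE 1 one_pos (fun _ => 1) (fun _ => one_pos) (fun _ _ => σ)
        (fun _ _ => α) (tensCtxFin 1 (fun _ => Γ)) (fun _ => Θ) mM (fun _ => mV)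
        (.lam M0) V hfun harg
      have hty : PEq (parFin 1 (fun _ : Fin 1 => parFin 1 (fun _ : Fin 1 => α))) α := by
        rw [parFin_one, parFin_one]
        exact PEq.refl α
      have hctx : CtxEq (Ctx.tens (tensCtxFin 1 (fun _ => Γ)) (tensCtxFin 1 (fun _ => Θ))) Δ := by
        intro p
        exact ((CEq.tensCongr (CEq.unit (Γ p)) (CEq.unit (Θ p))).trans (C p).symm)
      refine (Deriv.eqv happ hctx hty).cast ?_
      simp only [Fin.sum_univ_one]
      omega
  | plusL M0 N0 =>
      intro hπ
      exact Deriv.plusL N0 hπ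
  | plusR M0 N0 =>
      intro hπ
      exact Deriv.plusR M0 hπ
  | parAppL M0 N0 P0 =>
      intro hπ
      obtain ⟨Δ₁, Δ₂, β₁, β₂, m₁, m₂, d₁, d₂, hc, hp, hm⟩ := parInv hπ _ _ rfl
      obtain ⟨bs₁, Δ₀₁, Γs₁, ms₁, m0₁, hbs₁, hne₁, hM₁, hN₁, hc₁, hp₁, hm₁⟩ := appInv d₁ _ _ rfl
      obtain ⟨bs₂, Δ₀₂, Γs₂, ms₂, m0₂, hbs₂, hne₂, hM₂, hN₂, hc₂, hp₂, hm₂⟩ := appInv d₂ _ _ rfl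
      have hfun := Deriv.eqv (Deriv.parI hM₁ hM₂) (ctxEq_refl _)
        (funsPTy_append hbs₁ hbs₂).symm
      have hnea : ∀ b ∈ bs₁ ++ bs₂, b ≠ [] := by
        intro b hb
        rcases List.mem_append.mp hb with h | h
        · exact hne₁ b h
        · exact hne₂ b h
      have hbsa : bs₁ ++ bs₂ ≠ [] := by
        intro h
        exact hbs₁ (List.append_eq_nil_iff.mp h).1
      have happ := appE_list hbsa hnea hfun (hN₁.append hN₂)
      have T₁ := twolen_pos hbs₁ hne₁
      have T₂ := twolen_pos hbs₂ hne₂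
      have hctx : CtxEq (Ctx.tens (Ctx.tens Δ₀₁ Δ₀₂) (tensCtxList (Γs₁ ++ Γs₂))) Δ := by
        intro p
        have e1 := tensCtxList_append Γs₁ Γs₂ p
        exact (((CEq.tensCongr (CEq.refl _) e1).trans (tens_tens_comm _ _ _ _)).trans
          (CEq.tensCongr (hc₁ p).symm (hc₂ p).symm)).trans (hc p).symm
      have hty : PEq (ressPTy (bs₁ ++ bs₂)) α :=
        ((ressPTy_append hbs₁ hbs₂).trans (PEq.parCongr hp₁ hp₂)).trans hp
      refine (Deriv.eqv happ hctx hty).cast ?_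
      rw [List.sum_append, twoLenSum_append]
      omega
  | @parAppR V M0 N0 hv =>
      intro hπ
      obtain ⟨Δ₁, Δ₂, β₁, β₂, m₁, m₂, d₁, d₂, hc, hp, hm⟩ := parInv hπ _ _ rfl
      obtain ⟨bs₁, Δ₀₁, Γs₁, ms₁, m0₁, hbs₁, hne₁, hM₁, hN₁, hc₁, hp₁, hm₁⟩ := appInv d₁ _ _ rfl
      obtain ⟨bs₂, Δ₀₂, Γs₂, ms₂, m0₂, hbs₂, hne₂, hM₂, hN₂, hc₂, hp₂, hm₂⟩ := appInv d₂ _ _ rfl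
      have hb₁ : bs₁.length = 1 := by
        have := value_leaves_one hM₁ hv
        rwa [leaves_funsPTy hbs₁] at this
      have hb₂ : bs₂.length = 1 := by
        have := value_leaves_one hM₂ hv
        rwa [leaves_funsPTy hbs₂] at this
      obtain ⟨b₁, rfl⟩ := List.length_eq_one_iff.mp hb₁
      obtain ⟨b₂, rfl⟩ := List.length_eq_one_iff.mp hb₂
      have hb₁ne : b₁ ≠ [] := hne₁ b₁ (by simp)
      have hb₂ne : b₂ ≠ [] := hne₂ b₂ (by simp)
      cases hN₁ with
      | @cons _ _ Γ₁ _ mm₁ _ dM tl₁ =>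
        cases tl₁
        cases hN₂ with
        | @cons _ _ Γ₂ _ mm₂ _ dN tl₂ =>
          cases tl₂
          have merged := Deriv.eqv (mergeVal hv hM₁ hM₂) (ctxEq_refl _)
            (PEq.ofC (funCTy_append b₁ b₂).symm)
          have argD := Deriv.eqv (Deriv.parI dM dN) (ctxEq_refl _)
            (argPTy_append hb₁ne hb₂ne).symm
          have args := ArgsD.cons argD ArgsD.nil
          have hnea : ∀ b ∈ [b₁ ++ b₂], b ≠ [] := by
            intro b hb
            simp only [List.mem_singleton] at hb
            subst hb
            intro h
            exact hb₁ne (List.append_eq_nil_iff.mp h).1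
          have happ := appE_list (by simp) hnea merged args
          have hl₁ : 1 ≤ b₁.length := List.length_pos_iff.mpr hb₁ne
          have hl₂ : 1 ≤ b₂.length := List.length_pos_iff.mpr hb₂ne
          have hctx : CtxEq (Ctx.tens (Ctx.tens Δ₀₁ Δ₀₂) (tensCtxList [Ctx.tens Γ₁ Γ₂])) Δ := by
            intro p
            have step1 : CEq (tensCtxList [Ctx.tens Γ₁ Γ₂] p) (.tens (Γ₁ p) (Γ₂ p)) :=
              CEq.unit _
            have step2 : CEq (.tens (Γ₁ p) .one) (tensCtxList [Γ₁] p) := CEq.refl _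
            refine (((CEq.tensCongr (CEq.refl _) step1).trans
              (tens_tens_comm _ _ _ _)).trans ?_).trans (hc p).symm
            refine CEq.tensCongr ?_ ?_
            · exact ((CEq.tensCongr (CEq.refl _) (CEq.unit _).symm).trans (hc₁ p).symm)
            · exact ((CEq.tensCongr (CEq.refl _) (CEq.unit _).symm).trans (hc₂ p).symm)
          have hty : PEq (ressPTy [b₁ ++ b₂]) α := by
            rw [ressPTy_singleton]
            exact ((resPTy_append hb₁ne hb₂ne).trans (PEq.parCongr hp₁ hp₂)).trans hp
          refine (Deriv.eqv happ hctx hty).cast ?_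
          rw [twoLenSum_singleton, List.length_append] at *
          simp only [List.sum_cons, List.sum_nil] at *
          omega
  | parL N0 hsub ih =>
      intro hπ
      obtain ⟨Δ₁, Δ₂, β₁, β₂, m₁, m₂, d₁, d₂, hc, hp, hm⟩ := parInv hπ _ _ rfl
      exact (Deriv.eqv (Deriv.parI (ih _ _ _ d₁) d₂) (ctxEq_symm hc) hp).cast (by omega)
  | parR M0 hsub ih =>
      intro hπ
      obtain ⟨Δ₁, Δ₂, β₁, β₂, m₁, m₂, d₁, d₂, hc, hp, hm⟩ := parInv hπ _ _ rfl
      exact (Deriv.eqv (Deriv.parI d₁ (ih _ _ _ d₂)) (ctxEq_symm hc) hp).cast (by omega)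
  | appL N0 hsub hnp ih =>
      intro hπ
      obtain ⟨bs, Δ₀, Γs, ms, m0, hbs, hne, hM, hN, hc, hp, hm⟩ := appInv hπ _ _ rfl
      have happ := appE_list hbs hne (ih _ _ _ hM) hN
      have T := twolen_pos hbs hne
      exact (Deriv.eqv happ (ctxEq_symm hc) hp).cast (by omega)
  | @appR b0 M0 M0' V hv hsub hnp ih =>
      intro hπ
      obtain ⟨bs, Δ₀, Γs, ms, m0, hbs, hne, hM, hN, hc, hp, hm⟩ := appInv hπ _ _ rfl
      have hb : bs.length = 1 := by
        have := value_leaves_one hM hv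
        rwa [leaves_funsPTy hbs] at this
      obtain ⟨b, rfl⟩ := List.length_eq_one_iff.mp hb
      have hbne : b ≠ [] := hne b (by simp)
      cases hN with
      | @cons _ _ Γ₁ _ mm _ dM tl =>
        cases tl
        have args := ArgsD.cons (ih _ _ _ dM) ArgsD.nil
        have happ := appE_list hbs hne hM args
        have hl : 1 ≤ b.length := List.length_pos_iff.mpr hbne
        have hctx' : CtxEq (Ctx.tens Δ₀ (tensCtxList [Γ₁])) Δ := ctxEq_symm hc
        refine (Deriv.eqv happ hctx' hp).cast ?_
        rw [twoLenSum_singleton] at *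
        simp only [List.sum_cons, List.sum_nil] at *
        omega
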